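/- For all integers n ≥ 1 and 1 ≤ j ≤ n, the sum over all non-ascending tuples (c₁,…,c_j) of positive integers with c₁ + ⋯ + c_j = n of n(n-1)⋯(n-j+2)/f(c₁,…,c_j) equals (1/n)·C(n,j)·C(n,j-1), where f(c₁,…,c_j) = ∏_{k≥1} n_k! and n_k is the number of indices r with c_r = k. -/

import Mathlib

open scoped Classical

/-- `f(c₁,…,c_j) = ∏_{k ≥ 1} n_k!` where `n_k` is the multiplicity of `k`. -/
def fMult (m : Multiset ℕ) : ℕ := m.toFinset.prod fun k => (m.count k).factorial

namespace NarayanaAux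

open Finset

variable {j : ℕ}

/-- Descending sort of a tuple. -/
noncomputable def dsort (d : Fin j → ℕ) : Fin j → ℕ :=
  fun i => (d ∘ Tuple.sort d) i.rev

lemma map_univ_comp_perm (d : Fin j → ℕ) (g : Equiv.Perm (Fin j)) :
    Multiset.map (d ∘ g) Finset.univ.val = Multiset.map d Finset.univ.val := by
  rw [Fin.univ_val_map, Fin.univ_val_map, Multiset.coe_eq_coe]
  exact Equiv.Perm.ofFn_comp_perm g d

lemma dsort_eq_comp (d : Fin j → ℕ) :
    dsort d = d ∘ (Fin.revPerm.trans (Tuple.sort d)) := rfl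

lemma map_univ_dsort (d : Fin j → ℕ) :
    Multiset.map (dsort d) Finset.univ.val = Multiset.map d Finset.univ.val := by
  rw [dsort_eq_comp]; exact map_univ_comp_perm d _

lemma sorted_comp_sort_eq (c d : Fin j → ℕ)
    (h : Multiset.map d Finset.univ.val = Multiset.map c Finset.univ.val) :
    d ∘ Tuple.sort d = c ∘ Tuple.sort c := by
  apply List.ofFn_injective
  refine (fun h1 h2 h3 => List.Perm.eq_of_sortedLE h2 h3 h1) ?_ ?_ ?_
  · rw [← Multiset.coe_eq_coe, ← Fin.univ_val_map, ← Fin.univ_val_map,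
      map_univ_comp_perm, map_univ_comp_perm, h]
  · exact List.sortedLE_ofFn_iff.mpr (Tuple.monotone_sort d)
  · exact List.sortedLE_ofFn_iff.mpr (Tuple.monotone_sort c)

lemma dsort_congr {c d : Fin j → ℕ}
    (h : Multiset.map d Finset.univ.val = Multiset.map c Finset.univ.val) :
    dsort d = dsort c := by
  funext i
  show (d ∘ Tuple.sort d) i.rev = (c ∘ Tuple.sort c) i.rev
  rw [sorted_comp_sort_eq c d h]

lemma dsort_eq_self {c : Fin j → ℕ} (hc : ∀ r s : Fin j, r ≤ s → c s ≤ c r) :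
    dsort c = c := by
  have hm : Monotone (c ∘ (Fin.revPerm : Equiv.Perm (Fin j))) := by
    intro a b hab
    exact hc b.rev a.rev (Fin.rev_le_rev.mpr hab)
  have h := Tuple.unique_monotone (f := c) (σ := Tuple.sort c) (τ := Fin.revPerm)
      (Tuple.monotone_sort c) hm
  funext i
  show (c ∘ Tuple.sort c) i.rev = c i
  rw [h]
  simp

lemma dsort_antitone (d : Fin j → ℕ) {r s : Fin j} (hrs : r ≤ s) :
    dsort d s ≤ dsort d r := by
  exact Tuple.monotone_sort d (Fin.rev_le_rev.mpr hrs)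

lemma exists_perm {c d : Fin j → ℕ}
    (h : Multiset.map d Finset.univ.val = Multiset.map c Finset.univ.val) :
    ∃ g : Equiv.Perm (Fin j), d = c ∘ g := by
  refine ⟨(Tuple.sort d).symm.trans (Tuple.sort c), ?_⟩
  have h' := sorted_comp_sort_eq c d h
  funext x
  have := congrFun h' ((Tuple.sort d).symm x)
  simpa using this

/-- fMult is the product of factorials of fiber sizes. -/
lemma fMult_eq (c : Fin j → ℕ) :
    fMult (Multiset.map c Finset.univ.val) =
      ∏ i ∈ Finset.image c Finset.univ, (Fintype.card {a // c a = i}).factorial := by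
  unfold fMult
  rw [Multiset.toFinset_map, Finset.val_toFinset]
  refine Finset.prod_congr rfl fun i _ => ?_
  congr 1
  rw [Multiset.count_map, Fintype.card_subtype]
  rw [Finset.card_def, Finset.filter_val]
  congr 1
  exact Multiset.filter_congr (fun a _ => by constructor <;> exact fun h => h.symm)

lemma fMult_pos (m : Multiset ℕ) : 0 < fMult m :=
  Finset.prod_pos fun _ _ => Nat.factorial_pos _

/-- Orbit–stabilizer: the number of positive tuples with sorted version `c`,
times `fMult`, is `j!`. -/
lemma fiber_card_mul (n : ℕ) {c : Fin j → ℕ}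
    (hcmem : c ∈ Finset.Nat.antidiagonalTuple j n)
    (hmono : ∀ r s : Fin j, r ≤ s → c s ≤ c r) (hpos : ∀ r, 1 ≤ c r) :
    ((((Finset.Nat.antidiagonalTuple j n).filter (fun d => ∀ r, 1 ≤ d r)).filter
        (fun d => dsort d = c)).card)
      * fMult (Multiset.map c Finset.univ.val) = j.factorial := by
  classical
  set S := (Finset.Nat.antidiagonalTuple j n).filter (fun d => ∀ r, 1 ≤ d r) with hS
  set F := S.filter (fun d => dsort d = c) with hF
  have hsum : ∑ i, c i = n := Finset.Nat.mem_antidiagonalTuple.mp hcmem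
  have hmaps : ∀ g : Equiv.Perm (Fin j), c ∘ g ∈ F := by
    intro g
    rw [hF, Finset.mem_filter, hS, Finset.mem_filter]
    refine ⟨⟨Finset.Nat.mem_antidiagonalTuple.mpr ?_, fun r => hpos (g r)⟩, ?_⟩
    · exact Equiv.sum_comp g c |>.trans hsum
    · rw [dsort_congr (map_univ_comp_perm c g), dsort_eq_self hmono]
  have hcardperm : (Finset.univ : Finset (Equiv.Perm (Fin j))).card = j.factorial := by
    rw [Finset.card_univ, Fintype.card_perm, Fintype.card_fin]
  rw [← hcardperm,
    Finset.card_eq_sum_card_fiberwise (f := fun g : Equiv.Perm (Fin j) => c ∘ g)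
      (t := F) (fun g _ => hmaps g)]
  have hfiber : ∀ d ∈ F,
      ((Finset.univ : Finset (Equiv.Perm (Fin j))).filter
          (fun g : Equiv.Perm (Fin j) => c ∘ ⇑g = d)).card
        = fMult (Multiset.map c Finset.univ.val) := by
    intro d hd
    have hd' : dsort d = c := (Finset.mem_filter.mp hd).2
    have hmm : Multiset.map d Finset.univ.val = Multiset.map c Finset.univ.val := by
      rw [← map_univ_dsort d, hd']
    obtain ⟨g₀, rfl⟩ := exists_perm hmm
    have hbij : ((Finset.univ : Finset (Equiv.Perm (Fin j))).filter
        (fun g : Equiv.Perm (Fin j) => c ∘ ⇑g = c ∘ ⇑g₀)).card =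
        ((Finset.univ : Finset (Equiv.Perm (Fin j))).filter
          (fun g : Equiv.Perm (Fin j) => c ∘ ⇑g = c)).card := by
      apply Finset.card_bij' (fun g _ => g₀.symm.trans g) (fun h _ => g₀.trans h)
      · intro g hg
        rw [Finset.mem_filter] at hg ⊢
        refine ⟨Finset.mem_univ _, ?_⟩
        funext x
        have := congrFun hg.2 (g₀.symm x)
        simpa using this
      · intro h hh
        rw [Finset.mem_filter] at hh ⊢
        refine ⟨Finset.mem_univ _, ?_⟩
        funext x
        have := congrFun hh.2 (g₀ x)
        simpa using this
      · intro g _; ext x; simp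
      · intro h _; ext x; simp
    rw [hbij, fMult_eq c, ← DomMulAct.stabilizer_card' c, Fintype.card_subtype]
  rw [Finset.sum_congr rfl hfiber, Finset.sum_const, smul_eq_mul]

/-- Stars and bars: the number of positive `j`-tuples summing to `n`. -/
lemma card_S (n : ℕ) (hj : 1 ≤ j) (hjn : j ≤ n) :
    ((Finset.Nat.antidiagonalTuple j n).filter (fun d => ∀ r, 1 ≤ d r)).card
      = (n - 1).choose (j - 1) := by
  classical
  rw [← Fintype.card_coe]
  have e1 : ((Finset.Nat.antidiagonalTuple j n).filter (fun d => ∀ r, 1 ≤ d r) :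
      Finset (Fin j → ℕ)) ≃ {c : Fin j → ℕ // (∑ i, c i = n) ∧ ∀ r, 1 ≤ c r} :=
    Equiv.subtypeEquivRight (by
      intro c
      simp [Finset.mem_filter, Finset.Nat.mem_antidiagonalTuple])
  have e2 : {c : Fin j → ℕ // (∑ i, c i = n) ∧ ∀ r, 1 ≤ c r} ≃
      {c : Fin j → ℕ // ∑ i, c i = n - j} := by
    refine ⟨fun c => ⟨fun i => c.1 i - 1, ?_⟩, fun c => ⟨fun i => c.1 i + 1, ?_⟩, ?_, ?_⟩
    · obtain ⟨c, hc1, hc2⟩ := c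
      show ∑ i, (c i - 1) = n - j
      have h : ∑ i, (c i - 1) + ∑ _i : Fin j, 1 = ∑ i, c i := by
        rw [← Finset.sum_add_distrib]
        exact Finset.sum_congr rfl fun i _ => Nat.sub_add_cancel (hc2 i)
      simp only [Finset.sum_const, Finset.card_univ, Fintype.card_fin, smul_eq_mul,
        mul_one] at h
      omega
    · obtain ⟨c, hc⟩ := c
      show (∑ i, (c i + 1) = n) ∧ _
      refine ⟨?_, fun r => le_add_self⟩
      rw [Finset.sum_add_distrib, hc]
      simp only [Finset.sum_const, Finset.card_univ, Fintype.card_fin, smul_eq_mul, mul_one]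
      omega
    · rintro ⟨c, hc1, hc2⟩
      ext i
      exact Nat.sub_add_cancel (hc2 i)
    · rintro ⟨c, hc⟩
      ext i
      simp
  have hcardsum : ∀ (s : Finset (Fin j)) (f : Fin j → Multiset (Fin j)),
      Multiset.card (∑ i ∈ s, f i) = ∑ i ∈ s, Multiset.card (f i) := by
    intro s f
    induction s using Finset.cons_induction with
    | empty => simp
    | cons a s ha ih => simp [Finset.sum_cons, ih]
  have e3 : {c : Fin j → ℕ // ∑ i, c i = n - j} ≃ Sym (Fin j) (n - j) := by
    refine ⟨fun c => ⟨∑ i, Multiset.replicate (c.1 i) i, ?_⟩,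
      fun s => ⟨fun i => Multiset.count i s.1, ?_⟩, ?_, ?_⟩
    · rw [hcardsum]
      simp only [Multiset.card_replicate]
      exact c.2
    · obtain ⟨s, hs⟩ := s
      show ∑ i, Multiset.count i s = n - j
      rw [← hs]
      exact Multiset.sum_count_eq_card (fun a _ => Finset.mem_univ a)
    · rintro ⟨c, hc⟩
      ext i
      show Multiset.count i (∑ r, Multiset.replicate (c r) r) = c i
      simp only [Multiset.count_sum', Multiset.count_replicate]
      rw [Finset.sum_ite_eq' Finset.univ i c]
      simp
    · rintro ⟨s, hs⟩
      apply Subtype.ext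
      show ∑ i, Multiset.replicate (Multiset.count i s) i = s
      ext a
      simp only [Multiset.count_sum', Multiset.count_replicate]
      rw [Finset.sum_ite_eq' Finset.univ a (fun i => Multiset.count i s)]
      simp
  rw [Fintype.card_congr ((e1.trans e2).trans e3), Sym.card_sym_eq_multichoose,
    Fintype.card_fin, Nat.multichoose_eq]
  have h1 : j + (n - j) - 1 = n - 1 := by omega
  have h2 : n - j = (n - 1) - (j - 1) := by omega
  rw [h1, h2, Nat.choose_symm (by omega)]

end NarayanaAux

open NarayanaAux in
/-- Summing `n(n-1)⋯(n-j+2)/f(c₁,…,c_j)` over all non-ascending tuples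
`(c₁,…,c_j)` of positive integers with `c₁+⋯+c_j = n` gives the Narayana
number `(1/n) C(n,j) C(n,j-1)`. -/
theorem narayana_as_sum_over_types (n j : ℕ) (hn : 1 ≤ n) (hj : 1 ≤ j) (hjn : j ≤ n) :
    ∑ c ∈ (Finset.Nat.antidiagonalTuple j n).filter
        (fun c => (∀ r s : Fin j, r ≤ s → c s ≤ c r) ∧ ∀ r, 1 ≤ c r),
      (Nat.descFactorial n (j - 1) : ℚ) / (fMult (Multiset.map c Finset.univ.val) : ℚ) =
    (1 / n : ℚ) * (n.choose j : ℚ) * (n.choose (j - 1) : ℚ) := by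
  classical
  set S := (Finset.Nat.antidiagonalTuple j n).filter (fun d => ∀ r, 1 ≤ d r) with hS
  set T := (Finset.Nat.antidiagonalTuple j n).filter
      (fun c => (∀ r s : Fin j, r ≤ s → c s ≤ c r) ∧ ∀ r, 1 ≤ c r) with hT
  have hfact : ((j.factorial : ℚ)) ≠ 0 := Nat.cast_ne_zero.mpr (Nat.factorial_ne_zero j)
  have step1 : ∀ c ∈ T,
      (Nat.descFactorial n (j - 1) : ℚ) / (fMult (Multiset.map c Finset.univ.val) : ℚ)
      = (Nat.descFactorial n (j - 1) : ℚ) * ((S.filter (fun d => dsort d = c)).card : ℚ)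
          / (j.factorial : ℚ) := by
    intro c hc
    rw [hT, Finset.mem_filter] at hc
    obtain ⟨hcmem, hmono, hpos⟩ := hc
    have key := fiber_card_mul n hcmem hmono hpos
    rw [← hS] at key
    have keyQ : ((S.filter (fun d => dsort d = c)).card : ℚ)
        * (fMult (Multiset.map c Finset.univ.val) : ℚ) = (j.factorial : ℚ) := by
      exact_mod_cast congrArg (Nat.cast (R := ℚ)) key
    have hfm : ((fMult (Multiset.map c Finset.univ.val) : ℚ)) ≠ 0 :=
      Nat.cast_ne_zero.mpr (fMult_pos _).ne'
    rw [div_eq_div_iff hfm hfact, ← keyQ]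
    ring
  rw [Finset.sum_congr rfl step1]
  have hfib : S.card = ∑ c ∈ T, (S.filter (fun d => dsort d = c)).card := by
    apply Finset.card_eq_sum_card_fiberwise (f := fun d => dsort d)
    intro d hd
    rw [Finset.mem_coe, hS, Finset.mem_filter] at hd
    obtain ⟨hdmem, hdpos⟩ := hd
    rw [Finset.mem_coe, hT, Finset.mem_filter]
    refine ⟨Finset.Nat.mem_antidiagonalTuple.mpr ?_, fun r s hrs => dsort_antitone d hrs,
      fun r => ?_⟩
    · beta_reduce; rw [dsort_eq_comp]
      exact (Equiv.sum_comp (Fin.revPerm.trans (Tuple.sort d)) d).trans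
        (Finset.Nat.mem_antidiagonalTuple.mp hdmem)
    · beta_reduce; rw [dsort_eq_comp]
      exact hdpos _
  have hsum2 : ∑ c ∈ T,
      (Nat.descFactorial n (j - 1) : ℚ) * ((S.filter (fun d => dsort d = c)).card : ℚ)
        / (j.factorial : ℚ)
      = (Nat.descFactorial n (j - 1) : ℚ) / (j.factorial : ℚ) * (S.card : ℚ) := by
    rw [hfib]
    push_cast
    rw [Finset.mul_sum]
    exact Finset.sum_congr rfl fun c _ => by ring
  rw [hsum2, card_S n hj hjn]
  -- final numeric identity
  have hD : (Nat.descFactorial n (j - 1) : ℚ)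
      = ((j-1).factorial : ℚ) * (n.choose (j-1) : ℚ) := by
    exact_mod_cast congrArg (Nat.cast (R := ℚ)) (Nat.descFactorial_eq_factorial_mul_choose n (j-1))
  have hjf : (j.factorial : ℚ) = (j : ℚ) * ((j-1).factorial : ℚ) := by
    have h : j = (j - 1) + 1 := by omega
    rw [h, Nat.factorial_succ]
    push_cast
    ring
  have hkey : (n : ℚ) * ((n-1).choose (j-1) : ℚ) = (n.choose j : ℚ) * (j : ℚ) := by
    have h := Nat.add_one_mul_choose_eq (n-1) (j-1)
    have h1 : n - 1 + 1 = n := by omega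
    have h2 : j - 1 + 1 = j := by omega
    rw [h1, h2] at h
    exact_mod_cast congrArg (Nat.cast (R := ℚ)) h
  have hn0 : (n : ℚ) ≠ 0 := Nat.cast_ne_zero.mpr (by omega)
  have hj0 : (j : ℚ) ≠ 0 := Nat.cast_ne_zero.mpr (by omega)
  have hjf0 : (((j-1).factorial : ℚ)) ≠ 0 := Nat.cast_ne_zero.mpr (Nat.factorial_ne_zero _)
  rw [hD, hjf]
  field_simp
  linear_combination (n.choose (j-1) : ℚ) * hkey
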